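/- Fix K ≥ 1 and I ≥ 1. The map sending a pair of count vectors (g₁, g₂) to the (K+1)×(K+1) matrix M with M_{ab} = #{i ∈ Fin I : g₁ i = a and g₂ i = b} (indices a, b ranging over 0,…,K) induces a bijection between the set of identity states C^K_I (orbits of pairs of count vectors under the S₂ × S_I action) and the quotient by matrix transposition of the set 𝓜 of (K+1)×(K+1) matrices with nonnegative integer entries M_{ab} (a,b ∈ {0,…,K}) satisfying ∑_{a,b} M_{ab} = I and ∑_{a,b} a·M_{ab} = ∑_{a,b} b·M_{ab} = K. In particular |C^K_I| = |𝓜 / transpose|. -/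

import Mathlib

open Finset Matrix

/-- The orbit of an ordered pair of count vectors `(g₁, g₂)` under the action of
`S₂ × S_I`: the `S₂` factor swaps the two count vectors, and a permutation
`σ ∈ S_I` relabels the index set of both count vectors by precomposition
with `σ⁻¹`. -/
def pairOrbit (I : ℕ) (x : (Fin I → ℕ) × (Fin I → ℕ)) :
    Set ((Fin I → ℕ) × (Fin I → ℕ)) :=
  {y | ∃ σ : Equiv.Perm (Fin I),
    y = (x.1 ∘ ⇑σ.symm, x.2 ∘ ⇑σ.symm) ∨ y = (x.2 ∘ ⇑σ.symm, x.1 ∘ ⇑σ.symm)}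

/-- The set of identity states `C^K_I`: the orbits of pairs of count vectors of
size `K` on `Fin I` under the `S₂ × S_I` action. -/
def IdentityStates (K I : ℕ) :=
  {S : Set ((Fin I → ℕ) × (Fin I → ℕ)) //
    ∃ x : (Fin I → ℕ) × (Fin I → ℕ),
      (∑ i, x.1 i = K) ∧ (∑ i, x.2 i = K) ∧ S = pairOrbit I x}

/-- The `(K+1) × (K+1)` matrix associated with a pair of count vectors
`(g₁, g₂)`: entry `(a, b)` counts the indices `i` with `g₁ i = a` and
`g₂ i = b`. -/
def pairToMat (K I : ℕ) (x : (Fin I → ℕ) × (Fin I → ℕ)) :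
    Matrix (Fin (K + 1)) (Fin (K + 1)) ℕ :=
  fun a b => (Finset.univ.filter fun i : Fin I => x.1 i = (a : ℕ) ∧ x.2 i = (b : ℕ)).card

/-- The set `𝓜` of `(K+1) × (K+1)` matrices with nonnegative integer entries
whose entries sum to `I` and whose row- and column-weighted sums equal `K`. -/
def MatSet (K I : ℕ) : Set (Matrix (Fin (K + 1)) (Fin (K + 1)) ℕ) :=
  {M | (∑ a, ∑ b, M a b) = I ∧
    (∑ a : Fin (K + 1), ∑ b : Fin (K + 1), (a : ℕ) * M a b) = K ∧
    (∑ a : Fin (K + 1), ∑ b : Fin (K + 1), (b : ℕ) * M a b) = K}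

/-- The quotient `𝓜 / transpose`: orbits of matrices in `𝓜` under transposition. -/
def MatOrbits (K I : ℕ) :=
  {S : Set (Matrix (Fin (K + 1)) (Fin (K + 1)) ℕ) // ∃ M ∈ MatSet K I, S = {M, Mᵀ}}

/- ### Auxiliary lemmas -/

lemma aux_exists_perm_of_fiber_card {α β : Type*} [Fintype α] [DecidableEq α] [DecidableEq β]
    (f g : α → β)
    (h : ∀ b, Fintype.card {a // f a = b} = Fintype.card {a // g a = b}) :
    ∃ σ : Equiv.Perm α, f = g ∘ ⇑σ := by
  classical
  let e : ∀ b, {a // f a = b} ≃ {a // g a = b} := fun b => Fintype.equivOfCardEq (h b)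
  refine ⟨(Equiv.sigmaFiberEquiv f).symm.trans
    ((Equiv.sigmaCongrRight e).trans (Equiv.sigmaFiberEquiv g)), ?_⟩
  funext a
  exact ((e (f a) ⟨a, rfl⟩).prop).symm

lemma aux_le_K {I K : ℕ} {x : Fin I → ℕ} (h : ∑ i, x i = K) (i : Fin I) : x i ≤ K :=
  h ▸ Finset.single_le_sum (fun j _ => Nat.zero_le _) (Finset.mem_univ i)

lemma aux_sum_weight (K I : ℕ) (x : (Fin I → ℕ) × (Fin I → ℕ))
    (h1 : ∀ i, x.1 i ≤ K) (h2 : ∀ i, x.2 i ≤ K) (f : ℕ → ℕ → ℕ) :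
    ∑ a : Fin (K+1), ∑ b : Fin (K+1), f a b * pairToMat K I x a b
      = ∑ i, f (x.1 i) (x.2 i) := by
  unfold pairToMat
  simp only [Finset.card_filter, Finset.mul_sum, mul_ite, mul_one, mul_zero]
  conv_lhs => enter [2, a]; rw [Finset.sum_comm]
  rw [Finset.sum_comm]
  refine Finset.sum_congr rfl fun i _ => ?_
  have ha := Nat.lt_succ_of_le (h1 i)
  have hb := Nat.lt_succ_of_le (h2 i)
  have key : ∀ (a b : Fin (K+1)), (x.1 i = (a:ℕ) ∧ x.2 i = (b:ℕ)) ↔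
      (a = ⟨x.1 i, ha⟩ ∧ b = ⟨x.2 i, hb⟩) := by
    intro a b
    simp [Fin.ext_iff, eq_comm]
  simp only [key, ite_and]
  rw [Finset.sum_eq_single (⟨x.1 i, ha⟩ : Fin (K+1))]
  · simp
  · intro a _ hne; simp [hne]
  · simp

lemma aux_pairToMat_mem (K I : ℕ) (x : (Fin I → ℕ) × (Fin I → ℕ))
    (h₁ : ∑ i, x.1 i = K) (h₂ : ∑ i, x.2 i = K) : pairToMat K I x ∈ MatSet K I := by
  have h1 : ∀ i, x.1 i ≤ K := fun i => aux_le_K h₁ i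
  have h2 : ∀ i, x.2 i ≤ K := fun i => aux_le_K h₂ i
  refine ⟨?_, ?_, ?_⟩
  · have := aux_sum_weight K I x h1 h2 (fun _ _ => 1)
    simpa using this
  · have := aux_sum_weight K I x h1 h2 (fun a _ => a)
    simpa [h₁] using this
  · have := aux_sum_weight K I x h1 h2 (fun _ b => b)
    simpa [h₂] using this

lemma aux_fiber_card (K I : ℕ) (x : (Fin I → ℕ) × (Fin I → ℕ))
    (h1 : ∀ i, x.1 i ≤ K) (h2 : ∀ i, x.2 i ≤ K) (v : ℕ × ℕ) :
    Fintype.card {i : Fin I // (x.1 i, x.2 i) = v} =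
      if h : v.1 ≤ K ∧ v.2 ≤ K then
        pairToMat K I x ⟨v.1, Nat.lt_succ_of_le h.1⟩ ⟨v.2, Nat.lt_succ_of_le h.2⟩
      else 0 := by
  classical
  rw [Fintype.card_subtype]
  split
  · next h =>
    unfold pairToMat
    congr 1
    ext i
    simp [Prod.ext_iff]
  · next h =>
    rw [Finset.card_eq_zero, Finset.filter_eq_empty_iff]
    intro i _
    rw [Prod.ext_iff]
    rintro ⟨e1, e2⟩
    exact h ⟨e1 ▸ h1 i, e2 ▸ h2 i⟩

lemma aux_pairToMat_perm (K I : ℕ) (x : (Fin I → ℕ) × (Fin I → ℕ)) (σ : Equiv.Perm (Fin I)) :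
    pairToMat K I (x.1 ∘ ⇑σ.symm, x.2 ∘ ⇑σ.symm) = pairToMat K I x := by
  funext a b
  unfold pairToMat
  apply Finset.card_bij' (fun i _ => σ.symm i) (fun i _ => σ i)
  · intro i hi; simpa using hi
  · intro i hi; simpa using hi
  · intro i _; simp
  · intro i _; simp

lemma aux_pairToMat_swap (K I : ℕ) (x : (Fin I → ℕ) × (Fin I → ℕ)) :
    pairToMat K I (x.2, x.1) = (pairToMat K I x)ᵀ := by
  funext a b
  simp only [pairToMat, transpose_apply]
  congr 1
  ext i
  simp [and_comm]

lemma aux_mem_pairOrbit_self (I : ℕ) (x : (Fin I → ℕ) × (Fin I → ℕ)) : x ∈ pairOrbit I x :=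
  ⟨1, Or.inl (by rfl)⟩

lemma aux_swap_mem_pairOrbit (I : ℕ) (x : (Fin I → ℕ) × (Fin I → ℕ)) :
    (x.2, x.1) ∈ pairOrbit I x :=
  ⟨1, Or.inr (by rfl)⟩

lemma aux_pairOrbit_symm {I : ℕ} {x y : (Fin I → ℕ) × (Fin I → ℕ)}
    (h : y ∈ pairOrbit I x) : x ∈ pairOrbit I y := by
  obtain ⟨σ, h | h⟩ := h <;> subst h <;> refine ⟨σ⁻¹, ?_⟩
  · left
    ext i <;> simp [Equiv.Perm.inv_def]
  · right
    ext i <;> simp [Equiv.Perm.inv_def]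

lemma aux_pairOrbit_trans {I : ℕ} {x y z : (Fin I → ℕ) × (Fin I → ℕ)}
    (hz : z ∈ pairOrbit I y) (hy : y ∈ pairOrbit I x) : z ∈ pairOrbit I x := by
  obtain ⟨τ, hz | hz⟩ := hz <;> obtain ⟨σ, hy | hy⟩ := hy <;> subst hz <;> subst hy <;>
    refine ⟨τ * σ, ?_⟩
  · left; ext i <;> simp [Equiv.Perm.mul_def, Equiv.Perm.inv_def]
  · right; ext i <;> simp [Equiv.Perm.mul_def, Equiv.Perm.inv_def]
  · right; ext i <;> simp [Equiv.Perm.mul_def, Equiv.Perm.inv_def]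
  · left; ext i <;> simp [Equiv.Perm.mul_def, Equiv.Perm.inv_def]

lemma aux_pairOrbit_eq_of_mem {I : ℕ} {x y : (Fin I → ℕ) × (Fin I → ℕ)}
    (h : y ∈ pairOrbit I x) : pairOrbit I y = pairOrbit I x := by
  ext z
  exact ⟨fun hz => aux_pairOrbit_trans hz h,
    fun hz => aux_pairOrbit_trans hz (aux_pairOrbit_symm h)⟩

lemma aux_matEq_orbit {K I : ℕ} {x y : (Fin I → ℕ) × (Fin I → ℕ)}
    (hx1 : ∑ i, x.1 i = K) (hx2 : ∑ i, x.2 i = K)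
    (hy1 : ∑ i, y.1 i = K) (hy2 : ∑ i, y.2 i = K)
    (h : pairToMat K I y = pairToMat K I x) : y ∈ pairOrbit I x := by
  classical
  have hfib : ∀ v : ℕ × ℕ, Fintype.card {i // (y.1 i, y.2 i) = v}
      = Fintype.card {i // (x.1 i, x.2 i) = v} := by
    intro v
    rw [aux_fiber_card K I y (fun i => aux_le_K hy1 i) (fun i => aux_le_K hy2 i) v,
      aux_fiber_card K I x (fun i => aux_le_K hx1 i) (fun i => aux_le_K hx2 i) v]
    split
    · rw [h]
    · rfl
  obtain ⟨σ, hσ⟩ := aux_exists_perm_of_fiber_card _ _ hfib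
  refine ⟨σ⁻¹, Or.inl ?_⟩
  ext i <;>
  · have := congrFun hσ i
    simp only [Function.comp_apply, Prod.ext_iff] at this
    simp [Equiv.Perm.inv_def, this.1, this.2]

lemma aux_pairToMat_of_orbit {K I : ℕ} {x y : (Fin I → ℕ) × (Fin I → ℕ)}
    (h : y ∈ pairOrbit I x) :
    pairToMat K I y = pairToMat K I x ∨ pairToMat K I y = (pairToMat K I x)ᵀ := by
  obtain ⟨σ, h | h⟩ := h <;> subst h
  · left; exact aux_pairToMat_perm K I x σ
  · right
    rw [show ((x.2 ∘ ⇑σ.symm, x.1 ∘ ⇑σ.symm) : (Fin I → ℕ) × (Fin I → ℕ))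
        = ((x.2, x.1).1 ∘ ⇑σ.symm, (x.2, x.1).2 ∘ ⇑σ.symm) from rfl,
      aux_pairToMat_perm K I (x.2, x.1) σ, aux_pairToMat_swap K I x]

lemma aux_pairset_eq {K : ℕ} {M N : Matrix (Fin (K+1)) (Fin (K+1)) ℕ}
    (h : N = M ∨ N = Mᵀ) : ({N, Nᵀ} : Set _) = {M, Mᵀ} := by
  rcases h with h | h <;> subst h
  · rfl
  · rw [transpose_transpose, Set.pair_comm]

lemma aux_exists_pair_of_mem (K I : ℕ) {M : Matrix (Fin (K+1)) (Fin (K+1)) ℕ}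
    (hM : M ∈ MatSet K I) :
    ∃ x : (Fin I → ℕ) × (Fin I → ℕ),
      (∑ i, x.1 i = K) ∧ (∑ i, x.2 i = K) ∧ pairToMat K I x = M := by
  classical
  obtain ⟨hsum, hrow, hcol⟩ := hM
  have hcard : Fintype.card (Fin I)
      = Fintype.card (Σ q : Fin (K+1) × Fin (K+1), Fin (M q.1 q.2)) := by
    simp [Fintype.card_sigma, Fintype.sum_prod_type, hsum]
  let e := Fintype.equivOfCardEq hcard
  refine ⟨(fun i => ((e i).1.1 : ℕ), fun i => ((e i).1.2 : ℕ)), ?_, ?_, ?_⟩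
  · dsimp only
    rw [Equiv.sum_comp e (fun s => ((s.1.1 : ℕ)))]
    rw [← Finset.univ_sigma_univ, Finset.sum_sigma]
    simpa [Fintype.sum_prod_type, mul_comm] using hrow
  · dsimp only
    rw [Equiv.sum_comp e (fun s => ((s.1.2 : ℕ)))]
    rw [← Finset.univ_sigma_univ, Finset.sum_sigma]
    simpa [Fintype.sum_prod_type, mul_comm] using hcol
  · funext a b
    unfold pairToMat
    rw [Finset.card_filter]
    dsimp only
    rw [Equiv.sum_comp e (fun s => if ((s.1.1 : ℕ) = (a:ℕ) ∧ (s.1.2 : ℕ) = (b:ℕ)) then 1 else 0)]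
    rw [← Finset.univ_sigma_univ, Finset.sum_sigma]
    have : ∀ q : Fin (K+1) × Fin (K+1),
        (((q.1 : ℕ) = (a:ℕ) ∧ (q.2 : ℕ) = (b:ℕ))) ↔ q = (a, b) := by
      intro q; simp [Prod.ext_iff, Fin.ext_iff]
    simp only [this]
    rw [Fintype.sum_prod_type]
    simp [Prod.ext_iff, Finset.sum_ite_eq', ite_and]

/-- The forward map on orbits. -/
noncomputable def auxF (K I : ℕ) (S : IdentityStates K I) : MatOrbits K I :=
  ⟨{pairToMat K I S.2.choose, (pairToMat K I S.2.choose)ᵀ},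
    pairToMat K I S.2.choose,
    aux_pairToMat_mem K I _ S.2.choose_spec.1 S.2.choose_spec.2.1, rfl⟩

lemma auxF_eq (K I : ℕ) (S : IdentityStates K I) (x : (Fin I → ℕ) × (Fin I → ℕ))
    (hS : S.1 = pairOrbit I x) :
    (auxF K I S).1 = {pairToMat K I x, (pairToMat K I x)ᵀ} := by
  have hc3 := S.2.choose_spec.2.2
  have hmem : S.2.choose ∈ pairOrbit I x := by
    have h0 : S.2.choose ∈ pairOrbit I S.2.choose := aux_mem_pairOrbit_self I _
    exact hS.subset (hc3.symm.subset h0)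
  exact aux_pairset_eq (aux_pairToMat_of_orbit hmem)

lemma auxF_bijective (K I : ℕ) : Function.Bijective (auxF K I) := by
  constructor
  · intro S S' h
    obtain ⟨hx1, hx2, hx3⟩ := S.2.choose_spec
    obtain ⟨hy1, hy2, hy3⟩ := S'.2.choose_spec
    have hset : ({pairToMat K I S'.2.choose, (pairToMat K I S'.2.choose)ᵀ} :
        Set (Matrix (Fin (K+1)) (Fin (K+1)) ℕ))
        = {pairToMat K I S.2.choose, (pairToMat K I S.2.choose)ᵀ} :=
      (congrArg Subtype.val h).symm
    have hmem : pairToMat K I S'.2.choose ∈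
        ({pairToMat K I S.2.choose, (pairToMat K I S.2.choose)ᵀ} :
          Set (Matrix (Fin (K+1)) (Fin (K+1)) ℕ)) := by
      rw [← hset]; left; rfl
    apply Subtype.ext
    rw [hx3, hy3]
    rcases hmem with hm | hm
    · exact aux_pairOrbit_eq_of_mem (aux_matEq_orbit hx1 hx2 hy1 hy2 hm) |>.symm
    · have hm' : pairToMat K I S'.2.choose
          = pairToMat K I (S.2.choose.2, S.2.choose.1) := by
        rw [aux_pairToMat_swap]; exact hm
      have h1 : S'.2.choose ∈ pairOrbit I (S.2.choose.2, S.2.choose.1) :=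
        aux_matEq_orbit hx2 hx1 hy1 hy2 hm'
      rw [aux_pairOrbit_eq_of_mem h1,
        aux_pairOrbit_eq_of_mem (aux_swap_mem_pairOrbit I S.2.choose)]
  · intro T
    obtain ⟨M, hM, hT⟩ := T.2
    obtain ⟨x, h1, h2, hx⟩ := aux_exists_pair_of_mem K I hM
    refine ⟨⟨pairOrbit I x, x, h1, h2, rfl⟩, ?_⟩
    apply Subtype.ext
    exact (auxF_eq K I ⟨pairOrbit I x, x, h1, h2, rfl⟩ x rfl).trans (by rw [hT, hx])

/-- The map `(g₁, g₂) ↦ M`, `M_{ab} = #{i : g₁ i = a ∧ g₂ i = b}`, induces a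
bijection between the identity states `C^K_I` and `𝓜 / transpose`; in
particular `|C^K_I| = |𝓜 / transpose|`. -/
theorem identityStates_equiv_matOrbits (K I : ℕ) (hK : 1 ≤ K) (hI : 1 ≤ I) :
    (∃ e : IdentityStates K I ≃ MatOrbits K I,
      ∀ (x : (Fin I → ℕ) × (Fin I → ℕ)) (h₁ : ∑ i, x.1 i = K) (h₂ : ∑ i, x.2 i = K),
        (e ⟨pairOrbit I x, x, h₁, h₂, rfl⟩).1 = {pairToMat K I x, (pairToMat K I x)ᵀ}) ∧
    Nat.card (IdentityStates K I) = Nat.card (MatOrbits K I) := by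
  refine ⟨⟨Equiv.ofBijective (auxF K I) (auxF_bijective K I), ?_⟩, ?_⟩
  · intro x h₁ h₂
    exact auxF_eq K I ⟨pairOrbit I x, x, h₁, h₂, rfl⟩ x rfl
  · exact Nat.card_congr (Equiv.ofBijective (auxF K I) (auxF_bijective K I))
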